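/- arXiv:math/0503612 — 8 statements merged into one kernel-verified Lean document; each statement's English description precedes it below -/
import Mathlib

section
/- Let E be a Banach space, let L and P be continuous linear operators on E with P a projection (P∘P = P), and set Q = I − P. Then for every t ∈ ℝ the Duhamel relation holds: exp(tL) = exp(tQL) + ∫_0^t exp((t−s)L) ∘ (P∘L) ∘ exp(s QL) ds, where exp denotes the operator exponential and the integral is a Bochner integral of operator-valued functions. -/
open MeasureTheory

/-- **Duhamel relation between the full and the orthogonal dynamics.**
For continuous linear operators `L, P` on a Banach space with `P` a projection and `Q = I - P`,
`exp (tL) = exp (tQL) + ∫₀ᵗ exp ((t-s)L) ∘ (P∘L) ∘ exp (sQL) ds`. Here multiplication of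
continuous linear maps is composition. -/
theorem duhamel_relation
    {E : Type*} [NormedAddCommGroup E] [NormedSpace ℝ E] [CompleteSpace E]
    (L P : E →L[ℝ] E) (hP : P * P = P) (Q : E →L[ℝ] E) (hQ : Q = 1 - P) (t : ℝ) :
    NormedSpace.exp (t • L)
      = NormedSpace.exp (t • (Q * L)) +
        ∫ s in (0:ℝ)..t,
          NormedSpace.exp ((t - s) • L) * (P * L) * NormedSpace.exp (s • (Q * L)) := by
  set A : E →L[ℝ] E := Q * L with hA
  set g : ℝ → (E →L[ℝ] E) := fun s => NormedSpace.exp ((t - s) • L) * NormedSpace.exp (s • A)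
    with hg
  have hderiv : ∀ s ∈ Set.uIcc (0:ℝ) t, HasDerivAt g
      (-(NormedSpace.exp ((t - s) • L) * (P * L) * NormedSpace.exp (s • A))) s := by
    intro s _
    have h1 : HasDerivAt (fun u : ℝ => NormedSpace.exp ((t - u) • L))
        (-(NormedSpace.exp ((t - s) • L) * L)) s :=
      (hasDerivAt_exp_smul_const (𝕂 := ℝ) L (t - s)).comp_const_sub t s
    have h2 : HasDerivAt (fun u : ℝ => NormedSpace.exp (u • A))
        (A * NormedSpace.exp (s • A)) s := hasDerivAt_exp_smul_const' (𝕂 := ℝ) A s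
    have hmul := h1.mul h2
    refine hmul.congr_deriv ?_
    rw [hA, hQ]
    noncomm_ring
  have hcont : ContinuousOn
      (fun s => -(NormedSpace.exp ((t - s) • L) * (P * L) * NormedSpace.exp (s • A)))
      (Set.uIcc (0:ℝ) t) := by
    apply Continuous.continuousOn
    have c1 : Continuous fun s : ℝ => NormedSpace.exp ((t - s) • L) :=
      (continuous_iff_continuousAt.2 fun x => (NormedSpace.exp_analytic (𝕂 := ℝ) x).continuousAt).comp (by continuity)
    have c2 : Continuous fun s : ℝ => NormedSpace.exp (s • A) :=
      (continuous_iff_continuousAt.2 fun x => (NormedSpace.exp_analytic (𝕂 := ℝ) x).continuousAt).comp (by continuity)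
    exact ((c1.mul continuous_const).mul c2).neg
  have hInt : IntervalIntegrable
      (fun s => -(NormedSpace.exp ((t - s) • L) * (P * L) * NormedSpace.exp (s • A)))
      volume 0 t := hcont.intervalIntegrable
  have key := intervalIntegral.integral_eq_sub_of_hasDerivAt hderiv hInt
  rw [intervalIntegral.integral_neg] at key
  have hgt : g t = NormedSpace.exp (t • A) := by
    simp [hg, NormedSpace.exp_zero]
  have hg0 : g 0 = NormedSpace.exp (t • L) := by
    simp [hg, NormedSpace.exp_zero]
  rw [hgt, hg0] at key
  have h := neg_eq_iff_eq_neg.mp key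
  rw [h]
  abel
end

section
/- Let E be a Banach space, let L and P be continuous linear operators on E with P a projection (P∘P = P), and set Q = I − P. Then for every v ∈ E and every t ∈ ℝ, the Mori–Zwanzig identity holds: the function t ↦ exp(tL) v is differentiable and d/dt [exp(tL) v] = exp(tL) (P L v) + ∫_0^t exp((t−s)L) P L exp(sQL) (Q L v) ds + exp(tQL) (Q L v). In other words, the time derivative of the evolved observable splits exactly into a Markovian term, a memory term, and a noise term. -/
open MeasureTheory

section MZAux

variable {E : Type*} [NormedAddCommGroup E] [NormedSpace ℝ E] [CompleteSpace E]

/-- Duhamel / Dyson identity splitting `exp (tL)` along `L = PL + QL`. -/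
lemma mz_duhamel (L P Q : E →L[ℝ] E) (hQ : Q = 1 - P) (w : E) (t : ℝ) :
    NormedSpace.exp (t • L) w
      = (∫ s in (0:ℝ)..t,
          NormedSpace.exp ((t - s) • L) (P (L (NormedSpace.exp (s • (Q * L)) w))))
        + NormedSpace.exp (t • (Q * L)) w := by
  set g : ℝ → E := fun s =>
    (NormedSpace.exp ((t - s) • L) * NormedSpace.exp (s • (Q * L))) w with hg
  set g' : ℝ → E := fun s =>
    (-(NormedSpace.exp ((t - s) • L) * (P * L) * NormedSpace.exp (s • (Q * L)))) w with hg'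
  have hB : ∀ s : ℝ, HasDerivAt
      (fun s : ℝ => NormedSpace.exp ((t - s) • L) * NormedSpace.exp (s • (Q * L)))
      (-(NormedSpace.exp ((t - s) • L) * (P * L) * NormedSpace.exp (s • (Q * L)))) s := by
    intro s
    have h1 : HasDerivAt (fun s : ℝ => NormedSpace.exp ((t - s) • L))
        (-(NormedSpace.exp ((t - s) • L) * L)) s := by
      have hsub : HasDerivAt (fun s : ℝ => t - s) (-1 : ℝ) s := by
        simpa using (hasDerivAt_id s).const_sub t
      have := (hasDerivAt_exp_smul_const (𝕂 := ℝ) L (t - s)).scomp s hsub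
      simpa [Function.comp_def] using this
    have h2 : HasDerivAt (fun s : ℝ => NormedSpace.exp (s • (Q * L)))
        ((Q * L) * NormedSpace.exp (s • (Q * L))) s :=
      hasDerivAt_exp_smul_const' (𝕂 := ℝ) (Q * L) s
    have := h1.mul h2
    exact this.congr_deriv (by subst hQ; noncomm_ring)
  have hgderiv : ∀ s : ℝ, HasDerivAt g (g' s) s := by
    intro s
    have := (hB s).clm_apply (hasDerivAt_const s w)
    simpa [hg, hg'] using this
  have hcont : Continuous g' := by
    have hM : Continuous fun s : ℝ =>
        -(NormedSpace.exp ((t - s) • L) * (P * L) * NormedSpace.exp (s • (Q * L))) := by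
      apply Continuous.neg
      have c1 : Continuous fun u : ℝ => NormedSpace.exp (u • L) :=
        continuous_iff_continuousAt.2 fun u => (hasDerivAt_exp_smul_const (𝕂 := ℝ) L u).continuousAt
      have c2 : Continuous fun u : ℝ => NormedSpace.exp (u • (Q * L)) :=
        continuous_iff_continuousAt.2 fun u =>
          (hasDerivAt_exp_smul_const (𝕂 := ℝ) (Q * L) u).continuousAt
      exact ((c1.comp (continuous_const.sub continuous_id)).mul continuous_const).mul c2
    exact (ContinuousLinearMap.apply ℝ E w).continuous.comp hM
  have hint : IntervalIntegrable g' volume 0 t := hcont.intervalIntegrable 0 t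
  have key := intervalIntegral.integral_eq_sub_of_hasDerivAt
      (fun s _ => hgderiv s) hint
  have hgt : g t = NormedSpace.exp (t • (Q * L)) w := by
    simp [hg, NormedSpace.exp_zero]
  have hg0 : g 0 = NormedSpace.exp (t • L) w := by
    simp [hg, NormedSpace.exp_zero]
  rw [hgt, hg0] at key
  have hneg : (∫ s in (0:ℝ)..t, g' s)
      = -∫ s in (0:ℝ)..t,
          NormedSpace.exp ((t - s) • L) (P (L (NormedSpace.exp (s • (Q * L)) w))) := by
    rw [← intervalIntegral.integral_neg]
    congr 1
  rw [hneg] at key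
  have key2 : (∫ s in (0:ℝ)..t,
        NormedSpace.exp ((t - s) • L) (P (L (NormedSpace.exp (s • (Q * L)) w))))
      = NormedSpace.exp (t • L) w - NormedSpace.exp (t • (Q * L)) w := by
    have := congrArg Neg.neg key
    simpa [neg_sub] using this
  rw [key2]
  abel

end MZAux

/-- **The Mori–Zwanzig identity.**
For continuous linear operators `L, P` on a Banach space with `P` a projection and `Q = I - P`,
and for every `v`, the time derivative of the evolved observable `exp (tL) v` splits exactly
into a Markovian term `exp (tL) (PLv)`, a memory term
`∫₀ᵗ exp ((t-s)L) P L exp (sQL) (QLv) ds`, and a noise term `exp (tQL) (QLv)`. -/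
theorem mori_zwanzig_identity
    {E : Type*} [NormedAddCommGroup E] [NormedSpace ℝ E] [CompleteSpace E]
    (L P : E →L[ℝ] E) (hP : P * P = P) (Q : E →L[ℝ] E) (hQ : Q = 1 - P)
    (v : E) (t : ℝ) :
    HasDerivAt (fun τ : ℝ => NormedSpace.exp (τ • L) v)
      (NormedSpace.exp (t • L) (P (L v))
        + (∫ s in (0:ℝ)..t,
            NormedSpace.exp ((t - s) • L)
              (P (L (NormedSpace.exp (s • (Q * L)) (Q (L v))))))
        + NormedSpace.exp (t • (Q * L)) (Q (L v))) t := by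
  have hder : HasDerivAt (fun τ : ℝ => NormedSpace.exp (τ • L) v)
      (NormedSpace.exp (t • L) (L v)) t := by
    have := (hasDerivAt_exp_smul_const (𝕂 := ℝ) L t).clm_apply (hasDerivAt_const t v)
    simpa [ContinuousLinearMap.mul_apply] using this
  convert hder using 1
  have hsplit : L v = P (L v) + Q (L v) := by
    subst hQ; simp
  have hdu := mz_duhamel L P Q hQ (Q (L v)) t
  calc NormedSpace.exp (t • L) (P (L v))
      + (∫ s in (0:ℝ)..t,
          NormedSpace.exp ((t - s) • L)
            (P (L (NormedSpace.exp (s • (Q * L)) (Q (L v))))))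
      + NormedSpace.exp (t • (Q * L)) (Q (L v))
      = NormedSpace.exp (t • L) (P (L v)) + NormedSpace.exp (t • L) (Q (L v)) := by
        rw [add_assoc, ← hdu]
    _ = NormedSpace.exp (t • L) (L v) := by
        rw [← ContinuousLinearMap.map_add, ← hsplit]
end

section
/- Let H be a real Hilbert space, let L be a continuous linear operator on H that is skew-adjoint (⟨Lu, v⟩ = −⟨u, Lv⟩ for all u, v), let P be the orthogonal projection onto a closed subspace of H, and set Q = I − P. Then for every v ∈ H, every h in the range of P, and every s ∈ ℝ: ⟨L Q exp(sQL) Q L v, h⟩ = − ⟨exp(sQL) Q L v, Q L h⟩. That is, each coefficient of the memory kernel equals minus a temporal correlation of the noise processes exp(tQL)QLv and exp(tQL)QLh (fluctuation–dissipation relation: the memory kernel is built from covariances of the noise). -/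
open RealInnerProductSpace

/-- **Fluctuation–dissipation: the memory kernel is built from covariances of the noise.**
On a real Hilbert space, for a skew-adjoint continuous linear operator `L` and the orthogonal
projection `P` onto a closed subspace `K` (with `Q = I - P`), for every `v`, every `h` in the
range of `P`, and every `s`:
`⟨L Q exp (sQL) Q L v, h⟩ = -⟨exp (sQL) Q L v, Q L h⟩`. -/
theorem memory_kernel_is_noise_covariance
    {H : Type*} [NormedAddCommGroup H] [InnerProductSpace ℝ H] [CompleteSpace H]
    (L : H →L[ℝ] H) (hL : ∀ u v : H, ⟪L u, v⟫ = -⟪u, L v⟫)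
    (K : Submodule ℝ H) (hK : IsClosed (K : Set H)) [K.HasOrthogonalProjection]
    (P : H →L[ℝ] H) (hP : ∀ x : H, P x = (K.orthogonalProjectionOnto x : H))
    (Q : H →L[ℝ] H) (hQ : Q = 1 - P)
    (v h : H) (hh : h ∈ K) (s : ℝ) :
    ⟪L (Q (NormedSpace.exp (s • (Q * L)) (Q (L v)))), h⟫
      = -⟪NormedSpace.exp (s • (Q * L)) (Q (L v)), Q (L h)⟫ := by
  have hPsym : ∀ x y : H, ⟪P x, y⟫ = ⟪x, P y⟫ := by
    intro x y
    rw [hP, hP]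
    exact Submodule.inner_starProjection_left_eq_right K x y
  have hQsym : ∀ x y : H, ⟪Q x, y⟫ = ⟪x, Q y⟫ := by
    intro x y
    simp only [hQ, ContinuousLinearMap.sub_apply, ContinuousLinearMap.one_apply,
      inner_sub_left, inner_sub_right, hPsym]
  set x := NormedSpace.exp (s • (Q * L)) (Q (L v))
  rw [hL, neg_inj, hQsym]
end

section
/- Let H be a real Hilbert space, let L be a continuous linear operator on H that is skew-adjoint (⟨Lu, v⟩ = −⟨u, Lv⟩ for all u, v), let x₁ ∈ H with ‖x₁‖ = 1, let P be the orthogonal projection onto the span of x₁, and set Q = I − P. Define c(t) = ⟨exp(tL) x₁, x₁⟩ and the memory kernel K(s) = ⟨exp(sQL) Q L x₁, Q L x₁⟩. Then: (a) the noise term remains orthogonal to x₁, i.e. ⟨exp(tQL) Q L x₁, x₁⟩ = 0 for all t; and (b) c satisfies the linear integro-differential equation c′(t) = ⟨L x₁, x₁⟩ c(t) − ∫_0^t K(s) c(t−s) ds for all t. (This is the fluctuation–dissipation theorem of the first kind: the autocorrelation of the resolved variable decays according to the same equation as its projected mean.) -/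
set_option maxHeartbeats 1000000
set_option synthInstance.maxHeartbeats 400000


open RealInnerProductSpace

/-- **Fluctuation–dissipation theorem of the first kind.**
On a real Hilbert space, let `L` be skew-adjoint, `x₁` a unit vector, `P` the orthogonal
projection onto the span of `x₁` (`P v = ⟨v, x₁⟩ x₁`), `Q = I - P`. With the autocorrelation
`c(t) = ⟨exp (tL) x₁, x₁⟩` and the memory kernel `K(s) = ⟨exp (sQL) Q L x₁, Q L x₁⟩`:
(a) the noise stays orthogonal to `x₁`, i.e. `⟨exp (tQL) Q L x₁, x₁⟩ = 0` for all `t`; and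
(b) `c′(t) = ⟨L x₁, x₁⟩ c(t) - ∫₀ᵗ K(s) c(t-s) ds` for all `t`. -/
theorem fluctuation_dissipation_first_kind
    {H : Type*} [NormedAddCommGroup H] [InnerProductSpace ℝ H] [CompleteSpace H]
    (L : H →L[ℝ] H) (hL : ∀ u v : H, ⟪L u, v⟫ = -⟪u, L v⟫)
    (x₁ : H) (hx₁ : ‖x₁‖ = 1)
    (P : H →L[ℝ] H) (hP : ∀ v : H, P v = ⟪v, x₁⟫ • x₁)
    (Q : H →L[ℝ] H) (hQ : Q = 1 - P)
    (c Kmem : ℝ → ℝ)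
    (hc : ∀ t : ℝ, c t = ⟪NormedSpace.exp (t • L) x₁, x₁⟫)
    (hK : ∀ s : ℝ, Kmem s
      = ⟪NormedSpace.exp (s • (Q * L)) (Q (L x₁)), Q (L x₁)⟫) :
    (∀ t : ℝ, ⟪NormedSpace.exp (t • (Q * L)) (Q (L x₁)), x₁⟫ = 0)
    ∧ ∀ t : ℝ,
        HasDerivAt c (⟪L x₁, x₁⟫ * c t - ∫ s in (0:ℝ)..t, Kmem s * c (t - s)) t := by
  set A : H →L[ℝ] H := Q * L with hA
  set v : H := Q (L x₁) with hv
  have hx11 : ⟪x₁, x₁⟫ = (1 : ℝ) := by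
    rw [real_inner_self_eq_norm_sq, hx₁]; norm_num
  -- anything in the range of Q is orthogonal to x₁
  have hQx : ∀ u : H, ⟪Q u, x₁⟫ = 0 := by
    intro u
    rw [hQ]
    simp [hP, inner_sub_left, inner_smul_left, hx11, hx₁]
  -- derivative transfer : scalar observable of an operator-valued curve
  have key : ∀ (u w : H) (F : ℝ → (H →L[ℝ] H)) (F' : H →L[ℝ] H) (s : ℝ),
      HasDerivAt F F' s → HasDerivAt (fun r => ⟪F r u, w⟫) ⟪F' u, w⟫ s := by
    intro u w F F' s hF
    have h1 : HasDerivAt (fun r => F r u) (F' u) s := by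
      simpa using hF.clm_apply (hasDerivAt_const s u)
    simpa using h1.inner ℝ (hasDerivAt_const s w)
  -- (a): the noise term stays orthogonal to x₁
  have parta : ∀ t : ℝ, ⟪NormedSpace.exp (t • A) v, x₁⟫ = 0 := by
    intro t
    have hder : ∀ s : ℝ,
        HasDerivAt (fun r => ⟪NormedSpace.exp (r • A) v, x₁⟫) 0 s := by
      intro s
      have h0 := key v x₁ _ (A * NormedSpace.exp (s • A)) s
        (hasDerivAt_exp_smul_const' A s)
      have : ⟪(A * NormedSpace.exp (s • A)) v, x₁⟫ = 0 := by
        rw [ContinuousLinearMap.mul_apply, hA, ContinuousLinearMap.mul_apply]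
        exact hQx _
      rw [this] at h0; exact h0
    have hconst := is_const_of_deriv_eq_zero
      (fun s => (hder s).differentiableAt)
      (fun s => (hder s).deriv) t 0
    simpa [NormedSpace.exp_zero, hQx, hv] using hconst
  refine ⟨parta, ?_⟩
  intro t
  -- commutation of L with its exponential
  have hcomm : ∀ r : ℝ, L * NormedSpace.exp (r • L) = NormedSpace.exp (r • L) * L :=
    fun r => (((Commute.refl L).smul_right r).exp_right)
  -- the integrand is the derivative of ψ s = ⟪exp((t-s)L) (exp(sA) v), x₁⟫
  have hψ : ∀ s : ℝ,
      HasDerivAt (fun r => ⟪(NormedSpace.exp ((t - r) • L) *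
          NormedSpace.exp (r • A)) v, x₁⟫) (Kmem s * c (t - s)) s := by
    intro s
    have h1 : HasDerivAt (fun r : ℝ => NormedSpace.exp ((t - r) • L))
        ((-1 : ℝ) • (L * NormedSpace.exp ((t - s) • L))) s := by
      have := (hasDerivAt_exp_smul_const' L (t - s)).scomp s
        ((hasDerivAt_id s).const_sub t)
      simpa [Function.comp_def] using this
    have h2 : HasDerivAt (fun r : ℝ => NormedSpace.exp (r • A))
        (A * NormedSpace.exp (s • A)) s := hasDerivAt_exp_smul_const' A s
    have h3 := key v x₁ _ _ s (h1.mul h2)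
    set E₁ : H →L[ℝ] H := NormedSpace.exp ((t - s) • L)
    set E₂ : H →L[ℝ] H := NormedSpace.exp (s • A)
    set w : H := E₂ v with hw
    -- compute the derivative value
    have hLw : ⟪L w, x₁⟫ = -Kmem s := by
      have hdec : (L x₁ : H) = Q (L x₁) + ⟪L x₁, x₁⟫ • x₁ := by
        rw [hQ]; simp [hP]
      rw [hL w x₁, hdec, inner_add_right, inner_smul_right]
      have h5 : ⟪w, x₁⟫ = 0 := parta s
      have h6 : ⟪w, Q (L x₁)⟫ = Kmem s := by
        rw [hK s, real_inner_comm]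
      rw [h5, h6]; ring
    have hval : ⟪(((-1 : ℝ) • (L * E₁)) * E₂ + E₁ * (A * E₂)) v, x₁⟫
        = Kmem s * c (t - s) := by
      have hcm : L * E₁ = E₁ * L := hcomm (t - s)
      have hAv : A w - L w = Kmem s • x₁ := by
        have : A w = L w - P (L w) := by
          rw [hA, ContinuousLinearMap.mul_apply, hQ]
          simp
        rw [this, hP, hLw]
        simp
      have : (((-1 : ℝ) • (L * E₁)) * E₂ + E₁ * (A * E₂)) v
          = E₁ (A w - L w) := by
        rw [hcm]
        simp only [ContinuousLinearMap.add_apply, ContinuousLinearMap.mul_apply,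
          ContinuousLinearMap.smul_apply, map_sub, ← hw]
        module
      rw [this, hAv, map_smul, inner_smul_left]
      rw [hc (t - s)]
      norm_num
      left; rfl
    rwa [hval] at h3
  -- continuity facts
  have hexpA : Continuous fun s : ℝ => NormedSpace.exp (s • A) :=
    letI : NormedAlgebra ℚ (H →L[ℝ] H) := .restrictScalars ℚ ℝ _
    NormedSpace.exp_continuous.comp (continuous_id.smul continuous_const)
  have hexpL : Continuous fun s : ℝ => NormedSpace.exp (s • L) :=
    letI : NormedAlgebra ℚ (H →L[ℝ] H) := .restrictScalars ℚ ℝ _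
    NormedSpace.exp_continuous.comp (continuous_id.smul continuous_const)
  have hKcont : Continuous Kmem := by
    have : Continuous fun s : ℝ => ⟪NormedSpace.exp (s • A) v, v⟫ :=
      Continuous.inner (((ContinuousLinearMap.apply ℝ H v).continuous).comp hexpA)
        continuous_const
    simpa [funext hK] using this
  have hccont : Continuous c := by
    have : Continuous fun s : ℝ => ⟪NormedSpace.exp (s • L) x₁, x₁⟫ :=
      Continuous.inner (((ContinuousLinearMap.apply ℝ H x₁).continuous).comp hexpL)
        continuous_const
    simpa [funext hc] using this
  have hint : IntervalIntegrable (fun s => Kmem s * c (t - s)) MeasureTheory.volume 0 t :=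
    (hKcont.mul (hccont.comp (continuous_const.sub continuous_id))).intervalIntegrable 0 t
  -- FTC on ψ
  have hFTC := intervalIntegral.integral_eq_sub_of_hasDerivAt
    (f := fun r => ⟪(NormedSpace.exp ((t - r) • L) * NormedSpace.exp (r • A)) v, x₁⟫)
    (fun s _ => hψ s) hint
  have hψt : ⟪(NormedSpace.exp ((t - t) • L) * NormedSpace.exp (t • A)) v, x₁⟫ = 0 := by
    simp [NormedSpace.exp_zero, parta t]
  have hψ0 : ⟪(NormedSpace.exp ((t - 0) • L) * NormedSpace.exp ((0:ℝ) • A)) v, x₁⟫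
      = ⟪NormedSpace.exp (t • L) v, x₁⟫ := by
    simp [NormedSpace.exp_zero]
  have hnoise : ⟪NormedSpace.exp (t • L) v, x₁⟫
      = -∫ s in (0:ℝ)..t, Kmem s * c (t - s) := by
    rw [hFTC]; simp only [hψt, hψ0]; ring
  -- derivative of c
  have hcder : HasDerivAt c ⟪NormedSpace.exp (t • L) (L x₁), x₁⟫ t := by
    have h0 := key x₁ x₁ _ _ t (hasDerivAt_exp_smul_const L t)
    have hceq : c = fun r => ⟪NormedSpace.exp (r • L) x₁, x₁⟫ := funext hc
    rw [hceq]
    simpa [ContinuousLinearMap.mul_apply] using h0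
  have hfinal : ⟪NormedSpace.exp (t • L) (L x₁), x₁⟫
      = ⟪L x₁, x₁⟫ * c t - ∫ s in (0:ℝ)..t, Kmem s * c (t - s) := by
    have hdec : (L x₁ : H) = ⟪L x₁, x₁⟫ • x₁ + v := by
      rw [hv, hQ]; simp [hP]
    nth_rewrite 1 [hdec]
    rw [map_add, inner_add_left, map_smul, real_inner_smul_left, hnoise, hc t]
    ring
  rwa [hfinal] at hcder
end

section
/- Let E be a Banach space, let L and P be continuous linear operators on E with P a projection (P∘P = P), and set Q = I − P. Then for every v ∈ E, the error incurred by replacing the orthogonal dynamics exp(sQL) with the full dynamics exp(sL) inside the Mori–Zwanzig memory term is third order in time: ‖ ∫_0^t exp((t−s)L) P L exp(sQL) Q L v ds − ∫_0^t exp((t−s)L) P L Q exp(sL) Q L v ds ‖ = O(t³) as t → 0, i.e. there exist C > 0 and δ > 0 with the left-hand side bounded by C t³ for 0 ≤ t ≤ δ. -/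
open MeasureTheory

/-- Key quadratic bound: the operator `exp(sQL) Q - Q exp(sL) Q` is `O(s²)` on `[0,1]`. -/
lemma short_memory_key
    {E : Type*} [NormedAddCommGroup E] [NormedSpace ℝ E] [CompleteSpace E]
    (L P : E →L[ℝ] E) (hP : P * P = P) (Q : E →L[ℝ] E) (hQ : Q = 1 - P) :
    ∃ K ≥ (0:ℝ), ∀ s ∈ Set.Icc (0:ℝ) 1,
      ‖NormedSpace.exp (s • (Q * L)) * Q - Q * NormedSpace.exp (s • L) * Q‖ ≤ K * s ^ 2 := by
  have hQQ : Q * Q = Q := by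
    rw [hQ, sub_mul, one_mul, mul_sub, mul_one, hP]; abel
  set A := Q * L with hA
  set F : ℝ → (E →L[ℝ] E) := fun s => NormedSpace.exp (s • A) with hF
  set G : ℝ → (E →L[ℝ] E) := fun s => NormedSpace.exp (s • L) with hG
  set H : ℝ → (E →L[ℝ] E) := fun s => F s * Q - Q * G s * Q with hH
  set H₁ : ℝ → (E →L[ℝ] E) := fun s => F s * A * Q - Q * (G s * L) * Q with hH₁
  set H₂ : ℝ → (E →L[ℝ] E) := fun s => F s * A * A * Q - Q * (G s * L * L) * Q with hH₂
  have hFd : ∀ s : ℝ, HasDerivAt F (F s * A) s := fun s => hasDerivAt_exp_smul_const A s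
  have hGd : ∀ s : ℝ, HasDerivAt G (G s * L) s := fun s => hasDerivAt_exp_smul_const L s
  have hHd : ∀ s : ℝ, HasDerivAt H (H₁ s) s := fun s =>
    ((hFd s).mul_const Q).sub ((((hGd s)).const_mul Q).mul_const Q)
  have hH₁d : ∀ s : ℝ, HasDerivAt H₁ (H₂ s) s := fun s =>
    (((hFd s).mul_const A).mul_const Q).sub ((((hGd s).mul_const L).const_mul Q).mul_const Q)
  have hH0 : H 0 = 0 := by
    simp only [hH, hF, hG, zero_smul, NormedSpace.exp_zero, one_mul, mul_one, hQQ, sub_self]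
  have hH₁0 : H₁ 0 = 0 := by
    simp only [hH₁, hF, hG, zero_smul, NormedSpace.exp_zero, one_mul, hA, sub_self]
  have hFc : Continuous F :=
    (continuous_iff_continuousAt.2 fun x => (NormedSpace.exp_analytic (𝕂 := ℝ) x).continuousAt).comp (continuous_id.smul continuous_const)
  have hGc : Continuous G :=
    (continuous_iff_continuousAt.2 fun x => (NormedSpace.exp_analytic (𝕂 := ℝ) x).continuousAt).comp (continuous_id.smul continuous_const)
  have hH₁c : Continuous H₁ :=
    ((hFc.mul continuous_const).mul continuous_const).sub
      ((continuous_const.mul (hGc.mul continuous_const)).mul continuous_const)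
  have hH₂c : Continuous H₂ :=
    (((hFc.mul continuous_const).mul continuous_const).mul continuous_const).sub
      ((continuous_const.mul ((hGc.mul continuous_const).mul continuous_const)).mul
        continuous_const)
  obtain ⟨K₂, hK₂⟩ := (isCompact_Icc (a := (0:ℝ)) (b := 1)).exists_bound_of_continuousOn
    hH₂c.continuousOn
  have hK₂0 : 0 ≤ K₂ := le_trans (norm_nonneg _) (hK₂ 0 ⟨le_refl _, zero_le_one⟩)
  -- first: ‖H₁ s‖ ≤ K₂ * s on [0,1]
  have hb₁ : ∀ s ∈ Set.Icc (0:ℝ) 1, ‖H₁ s‖ ≤ K₂ * s := by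
    intro s hs
    have hint : ∫ r in (0:ℝ)..s, H₂ r = H₁ s - H₁ 0 :=
      intervalIntegral.integral_eq_sub_of_hasDerivAt (fun r _ => hH₁d r)
        (hH₂c.intervalIntegrable 0 s)
    rw [hH₁0, sub_zero] at hint
    rw [← hint]
    have h := intervalIntegral.norm_integral_le_of_norm_le_const (C := K₂)
      (f := H₂) (a := 0) (b := s) (fun r hr => by
        rw [Set.uIoc_of_le hs.1] at hr
        exact hK₂ r ⟨hr.1.le, hr.2.trans hs.2⟩)
    rw [sub_zero, abs_of_nonneg hs.1] at h; linarith
  -- then: ‖H s‖ ≤ K₂ * s ^ 2 on [0,1]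
  refine ⟨K₂, hK₂0, fun s hs => ?_⟩
  have hint : ∫ r in (0:ℝ)..s, H₁ r = H s - H 0 :=
    intervalIntegral.integral_eq_sub_of_hasDerivAt (fun r _ => hHd r)
      (hH₁c.intervalIntegrable 0 s)
  rw [hH0, sub_zero] at hint
  have key : ‖H s‖ ≤ K₂ * s ^ 2 := by
    rw [← hint]
    have h := intervalIntegral.norm_integral_le_of_norm_le (f := H₁)
      (g := fun r => K₂ * r) (a := 0) (b := s) (μ := volume) hs.1
      ((Filter.Eventually.of_forall (fun r hr => by
        exact hb₁ r ⟨hr.1.le, hr.2.trans hs.2⟩)))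
      ((continuous_const.mul continuous_id).intervalIntegrable 0 s)
    rw [intervalIntegral.integral_const_mul, integral_id] at h
    refine h.trans ?_
    nlinarith [sq_nonneg s]
  exact key

/-- **Third-order accuracy of the short-memory approximation of the memory term.**
For continuous linear operators `L, P` on a Banach space with `P` a projection and `Q = I - P`,
and for every `v`, replacing the orthogonal dynamics `exp (sQL)` by the full dynamics
`exp (sL)` (with the harmless extra factor `Q`) inside the Mori–Zwanzig memory term produces an
`O(t³)` error as `t → 0`. -/
theorem short_memory_third_order
    {E : Type*} [NormedAddCommGroup E] [NormedSpace ℝ E] [CompleteSpace E]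
    (L P : E →L[ℝ] E) (hP : P * P = P) (Q : E →L[ℝ] E) (hQ : Q = 1 - P)
    (v : E) :
    ∃ C > (0:ℝ), ∃ δ > (0:ℝ), ∀ t : ℝ, 0 ≤ t → t ≤ δ →
      ‖(∫ s in (0:ℝ)..t,
          NormedSpace.exp ((t - s) • L)
            (P (L (NormedSpace.exp (s • (Q * L)) (Q (L v))))))
        - ∫ s in (0:ℝ)..t,
            NormedSpace.exp ((t - s) • L)
              (P (L (Q (NormedSpace.exp (s • L) (Q (L v))))))‖
        ≤ C * t ^ 3 := by
  obtain ⟨K, hK0, hKb⟩ := short_memory_key L P hP Q hQ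
  have hGc : Continuous (fun r : ℝ => NormedSpace.exp (r • L)) :=
    (continuous_iff_continuousAt.2 fun x => (NormedSpace.exp_analytic (𝕂 := ℝ) x).continuousAt).comp (continuous_id.smul continuous_const)
  obtain ⟨M, hM⟩ := (isCompact_Icc (a := (0:ℝ)) (b := 1)).exists_bound_of_continuousOn
    hGc.continuousOn
  have hM0 : 0 ≤ M := le_trans (norm_nonneg _) (hM 0 ⟨le_refl _, zero_le_one⟩)
  set C₀ : ℝ := M * (‖P‖ * (‖L‖ * (K * ‖L v‖))) with hC₀
  have hC₀0 : 0 ≤ C₀ := by positivity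
  refine ⟨C₀ / 3 + 1, by positivity, 1, one_pos, fun t ht0 ht1 => ?_⟩
  set f : ℝ → E := fun s =>
    NormedSpace.exp ((t - s) • L) (P (L (NormedSpace.exp (s • (Q * L)) (Q (L v))))) with hf
  set g : ℝ → E := fun s =>
    NormedSpace.exp ((t - s) • L) (P (L (Q (NormedSpace.exp (s • L) (Q (L v)))))) with hg
  have couter : Continuous (fun s : ℝ => NormedSpace.exp ((t - s) • L)) :=
    (continuous_iff_continuousAt.2 fun x => (NormedSpace.exp_analytic (𝕂 := ℝ) x).continuousAt).comp ((continuous_const.sub continuous_id).smul continuous_const)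
  have cin1 : Continuous (fun s : ℝ => NormedSpace.exp (s • (Q * L)) (Q (L v))) :=
    ((continuous_iff_continuousAt.2 fun x => (NormedSpace.exp_analytic (𝕂 := ℝ) x).continuousAt).comp (continuous_id.smul continuous_const)).clm_apply
      continuous_const
  have cin2 : Continuous (fun s : ℝ => Q (NormedSpace.exp (s • L) (Q (L v)))) :=
    Q.continuous.comp (hGc.clm_apply continuous_const)
  have cf : Continuous f := couter.clm_apply (P.continuous.comp (L.continuous.comp cin1))
  have cg : Continuous g := couter.clm_apply (P.continuous.comp (L.continuous.comp cin2))
  rw [← intervalIntegral.integral_sub (cf.intervalIntegrable 0 t) (cg.intervalIntegrable 0 t)]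
  have hdiff : ∀ s : ℝ, f s - g s =
      NormedSpace.exp ((t - s) • L)
        (P (L ((NormedSpace.exp (s • (Q * L)) * Q - Q * NormedSpace.exp (s • L) * Q)
          (L v)))) := by
    intro s
    simp only [hf, hg, ContinuousLinearMap.sub_apply, ContinuousLinearMap.mul_apply, map_sub]
  have hbound : ∀ s ∈ Set.uIoc (0:ℝ) t, ‖f s - g s‖ ≤ C₀ * s ^ 2 := by
    intro s hs
    rw [Set.uIoc_of_le ht0] at hs
    have hs1 : s ∈ Set.Icc (0:ℝ) 1 := ⟨hs.1.le, hs.2.trans ht1⟩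
    have hts : t - s ∈ Set.Icc (0:ℝ) 1 := ⟨by linarith [hs.2], by linarith [hs.1, ht1]⟩
    rw [hdiff s]
    set Hs := NormedSpace.exp (s • (Q * L)) * Q - Q * NormedSpace.exp (s • L) * Q with hHs
    calc ‖NormedSpace.exp ((t - s) • L) (P (L (Hs (L v))))‖
        ≤ ‖NormedSpace.exp ((t - s) • L)‖ * ‖P (L (Hs (L v)))‖ :=
          ContinuousLinearMap.le_opNorm _ _
      _ ≤ M * (‖P‖ * (‖L‖ * ((K * s ^ 2) * ‖L v‖))) := by
          apply mul_le_mul (hM _ hts)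
          · refine (P.le_opNorm _).trans ?_
            apply mul_le_mul_of_nonneg_left ?_ (norm_nonneg P)
            refine (L.le_opNorm _).trans ?_
            apply mul_le_mul_of_nonneg_left ?_ (norm_nonneg L)
            refine (Hs.le_opNorm _).trans ?_
            exact mul_le_mul_of_nonneg_right (hKb s hs1) (norm_nonneg _)
          · exact norm_nonneg _
          · exact hM0
      _ = C₀ * s ^ 2 := by rw [hC₀]; ring
  have h := intervalIntegral.norm_integral_le_of_norm_le (f := fun s => f s - g s)
    (g := fun s => C₀ * s ^ 2) (a := 0) (b := t) (μ := volume) ht0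
    (Filter.Eventually.of_forall (fun s hs => hbound s (by rwa [Set.uIoc_of_le ht0])))
    ((continuous_const.mul (continuous_pow 2)).intervalIntegrable 0 t)
  refine h.trans ?_
  rw [intervalIntegral.integral_const_mul, integral_pow]
  have ht3 : (0:ℝ) ≤ t ^ 3 := by positivity
  have : C₀ * ((t ^ (2 + 1) - 0 ^ (2 + 1)) / ((2:ℕ) + 1)) = C₀ / 3 * t ^ 3 := by
    push_cast; ring
  rw [this]
  nlinarith
end

section
/- Let E be a Banach space, let L and P be continuous linear operators on E with P a projection (P∘P = P), and set Q = I − P. Then for every v ∈ E the t-model approximation of the Mori–Zwanzig memory term is second-order accurate in time: ‖ ∫_0^t exp((t−s)L) P L exp(sQL) Q L v ds − t · exp(tL) P L Q L v ‖ = O(t²) as t → 0, i.e. there exist C > 0 and δ > 0 with the left-hand side bounded by C t² for 0 ≤ t ≤ δ. -/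
open MeasureTheory

lemma my_term_le {E : Type*} [NormedAddCommGroup E] [NormedSpace ℝ E] [CompleteSpace E]
    (A : E →L[ℝ] E) (n : ℕ) :
    ‖((Nat.factorial n : ℝ))⁻¹ • A ^ n‖ ≤ ‖A‖ ^ n / (Nat.factorial n) := by
  have h1 : ‖((Nat.factorial n : ℝ))⁻¹ • A ^ n‖ = ((Nat.factorial n : ℝ))⁻¹ * ‖A ^ n‖ := by
    have := norm_smul ((Nat.factorial n : ℝ))⁻¹ (A ^ n)
    simpa [abs_of_nonneg (by positivity : (0:ℝ) ≤ ((Nat.factorial n : ℝ))⁻¹)] using this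
  rw [h1, div_eq_inv_mul]
  gcongr
  cases n with
  | zero =>
    have h1 : ‖(1 : E →L[ℝ] E)‖ ≤ 1 := ContinuousLinearMap.norm_id_le (𝕜 := ℝ) (E := E)
    simpa using h1
  | succ n => exact norm_pow_le' A n.succ_pos

lemma my_norm_exp_le {E : Type*} [NormedAddCommGroup E] [NormedSpace ℝ E] [CompleteSpace E]
    (A : E →L[ℝ] E) : ‖NormedSpace.exp A‖ ≤ Real.exp ‖A‖ := by
  rw [NormedSpace.exp_eq_tsum ℝ, Real.exp_eq_exp_ℝ, NormedSpace.exp_eq_tsum_div]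
  refine (norm_tsum_le_tsum_norm ?_).trans (Summable.tsum_le_tsum (my_term_le A) ?_ ?_)
  · exact Summable.of_nonneg_of_le (fun n => norm_nonneg _) (my_term_le A)
      (Real.summable_pow_div_factorial ‖A‖)
  · exact Summable.of_nonneg_of_le (fun n => norm_nonneg _) (my_term_le A)
      (Real.summable_pow_div_factorial ‖A‖)
  · exact Real.summable_pow_div_factorial ‖A‖

lemma my_exp_lip {E : Type*} [NormedAddCommGroup E] [NormedSpace ℝ E] [CompleteSpace E]
    (A : E →L[ℝ] E) (x : E) {a b : ℝ}
    (ha : a ∈ Set.Icc (0:ℝ) 1) (hb : b ∈ Set.Icc (0:ℝ) 1) :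
    ‖NormedSpace.exp (b • A) x - NormedSpace.exp (a • A) x‖
      ≤ (Real.exp ‖A‖ * ‖A‖ * ‖x‖) * |b - a| := by
  have hd : ∀ u ∈ Set.Icc (0:ℝ) 1, HasDerivWithinAt
      (fun u : ℝ => NormedSpace.exp (u • A) x)
      ((NormedSpace.exp (u • A) * A) x) (Set.Icc (0:ℝ) 1) u := by
    intro u _
    exact (((hasDerivAt_exp_smul_const A u).clm_apply (hasDerivAt_const u x)).congr_deriv
      (by simp)).hasDerivWithinAt
  have hbound : ∀ u ∈ Set.Icc (0:ℝ) 1,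
      ‖(NormedSpace.exp (u • A) * A) x‖ ≤ Real.exp ‖A‖ * ‖A‖ * ‖x‖ := by
    intro u hu
    calc ‖(NormedSpace.exp (u • A) * A) x‖
        ≤ ‖NormedSpace.exp (u • A)‖ * ‖A‖ * ‖x‖ := by
          refine ((NormedSpace.exp (u • A) * A).le_opNorm x).trans ?_
          gcongr
          exact norm_mul_le _ _
      _ ≤ Real.exp ‖A‖ * ‖A‖ * ‖x‖ := by
          gcongr
          refine (my_norm_exp_le _).trans (Real.exp_le_exp.2 ?_)
          calc ‖u • A‖ = |u| * ‖A‖ := norm_smul u A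
            _ ≤ 1 * ‖A‖ := by gcongr; rw [abs_of_nonneg hu.1]; exact hu.2
            _ = ‖A‖ := one_mul _
  have := (convex_Icc (0:ℝ) 1).norm_image_sub_le_of_norm_hasDerivWithin_le
    hd hbound ha hb
  simpa [Real.norm_eq_abs] using this

lemma my_norm_exp_smul_le {E : Type*} [NormedAddCommGroup E] [NormedSpace ℝ E] [CompleteSpace E]
    (A : E →L[ℝ] E) {u : ℝ} (hu : u ∈ Set.Icc (0:ℝ) 1) :
    ‖NormedSpace.exp (u • A)‖ ≤ Real.exp ‖A‖ := by
  refine (my_norm_exp_le _).trans (Real.exp_le_exp.2 ?_)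
  calc ‖u • A‖ = |u| * ‖A‖ := norm_smul u A
    _ ≤ 1 * ‖A‖ := by gcongr; rw [abs_of_nonneg hu.1]; exact hu.2
    _ = ‖A‖ := one_mul _

/-- **Second-order accuracy of the t-model.**
For continuous linear operators `L, P` on a Banach space with `P` a projection and `Q = I - P`,
and for every `v`, the t-model approximation `t · exp (tL) PLQLv` of the Mori–Zwanzig memory
term `∫₀ᵗ exp ((t-s)L) PL exp (sQL) QLv ds` is accurate to `O(t²)` as `t → 0`. -/
theorem t_model_second_order
    {E : Type*} [NormedAddCommGroup E] [NormedSpace ℝ E] [CompleteSpace E]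
    (L P : E →L[ℝ] E) (hP : P * P = P) (Q : E →L[ℝ] E) (hQ : Q = 1 - P)
    (v : E) :
    ∃ C > (0:ℝ), ∃ δ > (0:ℝ), ∀ t : ℝ, 0 ≤ t → t ≤ δ →
      ‖(∫ s in (0:ℝ)..t,
          NormedSpace.exp ((t - s) • L)
            (P (L (NormedSpace.exp (s • (Q * L)) (Q (L v))))))
        - t • NormedSpace.exp (t • L) (P (L (Q (L v))))‖
        ≤ C * t ^ 2 := by
  set w : E := Q (L v) with hw
  set x : E := P (L w) with hx
  set K1 : ℝ := Real.exp ‖L‖ * ‖P‖ * ‖L‖ * (Real.exp ‖Q * L‖ * ‖Q * L‖ * ‖w‖) with hK1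
  set K2 : ℝ := Real.exp ‖L‖ * ‖L‖ * ‖x‖ with hK2
  have hK1n : 0 ≤ K1 := by positivity
  have hK2n : 0 ≤ K2 := by positivity
  refine ⟨K1 + K2 + 1, by positivity, 1, one_pos, fun t ht ht1 => ?_⟩
  set f : ℝ → E := fun s =>
    NormedSpace.exp ((t - s) • L) (P (L (NormedSpace.exp (s • (Q * L)) w))) with hf
  set g : E := NormedSpace.exp (t • L) x with hg
  have hfc : Continuous f := by
    apply Continuous.clm_apply
    · exact (show Continuous (NormedSpace.exp : (E →L[ℝ] E) → (E →L[ℝ] E)) from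
          continuous_iff_continuousAt.2 fun y => (NormedSpace.exp_analytic (𝕂 := ℝ) y).continuousAt).comp
        ((continuous_const.sub continuous_id).smul continuous_const)
    · exact P.continuous.comp <| L.continuous.comp <| Continuous.clm_apply
        ((show Continuous (NormedSpace.exp : (E →L[ℝ] E) → (E →L[ℝ] E)) from
          continuous_iff_continuousAt.2 fun y => (NormedSpace.exp_analytic (𝕂 := ℝ) y).continuousAt).comp (continuous_id.smul continuous_const))
        continuous_const
  have hintf : IntervalIntegrable f volume 0 t := hfc.intervalIntegrable 0 t
  have hintg : IntervalIntegrable (fun _ : ℝ => g) volume 0 t :=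
    intervalIntegrable_const
  have hsplit : (∫ s in (0:ℝ)..t, f s) - t • g = ∫ s in (0:ℝ)..t, (f s - g) := by
    rw [intervalIntegral.integral_sub hintf hintg, intervalIntegral.integral_const]
    simp
  have hbound : ∀ s ∈ Set.uIoc (0:ℝ) t, ‖f s - g‖ ≤ (K1 + K2) * t := by
    intro s hs
    rw [Set.uIoc_of_le ht] at hs
    obtain ⟨hs0, hst⟩ := hs
    have hs0' : (0:ℝ) ≤ s := hs0.le
    have hts : t - s ∈ Set.Icc (0:ℝ) 1 := ⟨by linarith, by linarith⟩
    have htI : t ∈ Set.Icc (0:ℝ) 1 := ⟨ht, ht1⟩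
    have hsI : s ∈ Set.Icc (0:ℝ) 1 := ⟨hs0', by linarith⟩
    have h0I : (0:ℝ) ∈ Set.Icc (0:ℝ) 1 := ⟨le_refl _, zero_le_one⟩
    have key : f s - g =
        NormedSpace.exp ((t - s) • L)
          (P (L (NormedSpace.exp (s • (Q * L)) w)) - P (L w))
        + (NormedSpace.exp ((t - s) • L) x - NormedSpace.exp (t • L) x) := by
      simp only [hf, hg, hx, map_sub]
      abel
    rw [key]
    have hA : ‖NormedSpace.exp ((t - s) • L)
        (P (L (NormedSpace.exp (s • (Q * L)) w)) - P (L w))‖ ≤ K1 * s := by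
      have h1 : ‖NormedSpace.exp (s • (Q * L)) w - w‖
          ≤ (Real.exp ‖Q * L‖ * ‖Q * L‖ * ‖w‖) * s := by
        have := my_exp_lip (Q * L) w h0I hsI
        simpa [NormedSpace.exp_zero, abs_of_nonneg hs0'] using this
      calc ‖NormedSpace.exp ((t - s) • L)
            (P (L (NormedSpace.exp (s • (Q * L)) w)) - P (L w))‖
          ≤ ‖NormedSpace.exp ((t - s) • L)‖ *
              ‖P (L (NormedSpace.exp (s • (Q * L)) w)) - P (L w)‖ :=
            ContinuousLinearMap.le_opNorm _ _
        _ ≤ Real.exp ‖L‖ * (‖P‖ * (‖L‖ * ((Real.exp ‖Q * L‖ * ‖Q * L‖ * ‖w‖) * s))) := by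
            refine mul_le_mul (my_norm_exp_smul_le L hts) ?_ (norm_nonneg _)
              (Real.exp_pos _).le
            calc ‖P (L (NormedSpace.exp (s • (Q * L)) w)) - P (L w)‖
                = ‖P (L (NormedSpace.exp (s • (Q * L)) w) - L w)‖ := by rw [map_sub]
              _ ≤ ‖P‖ * ‖L (NormedSpace.exp (s • (Q * L)) w) - L w‖ :=
                  P.le_opNorm _
              _ = ‖P‖ * ‖L (NormedSpace.exp (s • (Q * L)) w - w)‖ := by rw [map_sub]
              _ ≤ ‖P‖ * (‖L‖ * ‖NormedSpace.exp (s • (Q * L)) w - w‖) := by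
                  gcongr; exact L.le_opNorm _
              _ ≤ ‖P‖ * (‖L‖ * ((Real.exp ‖Q * L‖ * ‖Q * L‖ * ‖w‖) * s)) := by
                  gcongr
        _ = K1 * s := by rw [hK1]; ring
    have hB : ‖NormedSpace.exp ((t - s) • L) x - NormedSpace.exp (t • L) x‖
        ≤ K2 * s := by
      have := my_exp_lip L x htI hts
      rw [hK2]
      calc ‖NormedSpace.exp ((t - s) • L) x - NormedSpace.exp (t • L) x‖
          ≤ (Real.exp ‖L‖ * ‖L‖ * ‖x‖) * |t - s - t| := this
        _ = Real.exp ‖L‖ * ‖L‖ * ‖x‖ * s := by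
            rw [show t - s - t = -s by ring, abs_neg, abs_of_nonneg hs0']
    calc ‖NormedSpace.exp ((t - s) • L)
          (P (L (NormedSpace.exp (s • (Q * L)) w)) - P (L w))
        + (NormedSpace.exp ((t - s) • L) x - NormedSpace.exp (t • L) x)‖
        ≤ K1 * s + K2 * s := (norm_add_le _ _).trans (add_le_add hA hB)
      _ ≤ (K1 + K2) * t := by nlinarith
  calc ‖(∫ s in (0:ℝ)..t, f s) - t • g‖
      = ‖∫ s in (0:ℝ)..t, (f s - g)‖ := by rw [hsplit]
    _ ≤ (K1 + K2) * t * |t - 0| :=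
        intervalIntegral.norm_integral_le_of_norm_le_const hbound
    _ ≤ (K1 + K2 + 1) * t ^ 2 := by
        rw [sub_zero, abs_of_nonneg ht]
        nlinarith
end

section
/- Let Φ = (Φ₁, Φ₂) : [0, ∞) → ℝ² be a differentiable solution of the t-model equations for the Hald system: dΦ₁/dt = Φ₂ and dΦ₂/dt = −Φ₁ (1 + 1/(1 + Φ₁²)) − 2t Φ₁² Φ₂ / (1 + Φ₁²)². Let Ĥ(Φ₁,Φ₂) = (1/2)(Φ₁² + Φ₂²) + (1/2) log(1 + Φ₁²) be the renormalized Hamiltonian (up to an additive constant). Then along any solution, d/dt [Ĥ(Φ₁(t), Φ₂(t))] = −2t Φ₁(t)² Φ₂(t)² / (1 + Φ₁(t)²)², and in particular d/dt Ĥ(Φ₁(t),Φ₂(t)) ≤ 0 for all t ≥ 0: the renormalized Hamiltonian is nonincreasing along trajectories of the t-model. -/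
/-- **The renormalized Hamiltonian decays along t-model trajectories of the Hald system.**
If `(Φ₁, Φ₂)` is a differentiable solution on `[0,∞)` of the t-model equations
`dΦ₁/dt = Φ₂`, `dΦ₂/dt = -Φ₁(1 + 1/(1+Φ₁²)) - 2t Φ₁²Φ₂/(1+Φ₁²)²`, and
`Ĥ(Φ₁,Φ₂) = (1/2)(Φ₁² + Φ₂²) + (1/2) log (1+Φ₁²)` is the renormalized Hamiltonian (up to an
additive constant), then along any solution
`d/dt Ĥ(Φ₁(t),Φ₂(t)) = -2t Φ₁(t)²Φ₂(t)²/(1+Φ₁(t)²)² ≤ 0` for all `t ≥ 0`. -/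
theorem hald_t_model_hamiltonian_decay
    (Φ₁ Φ₂ : ℝ → ℝ)
    (h₁ : ∀ t : ℝ, 0 ≤ t →
      HasDerivWithinAt Φ₁ (Φ₂ t) (Set.Ici (0:ℝ)) t)
    (h₂ : ∀ t : ℝ, 0 ≤ t →
      HasDerivWithinAt Φ₂
        (-(Φ₁ t) * (1 + 1 / (1 + (Φ₁ t)^2))
          - 2 * t * (Φ₁ t)^2 * Φ₂ t / (1 + (Φ₁ t)^2)^2)
        (Set.Ici (0:ℝ)) t) :
    ∀ t : ℝ, 0 ≤ t →
      HasDerivWithinAt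
        (fun s : ℝ => (1/2) * ((Φ₁ s)^2 + (Φ₂ s)^2) + (1/2) * Real.log (1 + (Φ₁ s)^2))
        (-2 * t * (Φ₁ t)^2 * (Φ₂ t)^2 / (1 + (Φ₁ t)^2)^2)
        (Set.Ici (0:ℝ)) t
      ∧ -2 * t * (Φ₁ t)^2 * (Φ₂ t)^2 / (1 + (Φ₁ t)^2)^2 ≤ 0 := by
  intro t ht
  have ha : (0:ℝ) < 1 + (Φ₁ t)^2 := by positivity
  constructor
  · have hd1 := h₁ t ht
    have hd2 := h₂ t ht
    have hsq : HasDerivWithinAt (fun s => 1 + (Φ₁ s)^2) (2 * Φ₁ t * Φ₂ t) (Set.Ici (0:ℝ)) t := by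
      have := (hd1.pow 2)
      simpa using (this.const_add 1)
    have hlog := hsq.log (ne_of_gt ha)
    have hq : HasDerivWithinAt (fun s => (1/2) * ((Φ₁ s)^2 + (Φ₂ s)^2))
        ((1/2) * (2 * Φ₁ t * Φ₂ t + 2 * Φ₂ t *
          (-(Φ₁ t) * (1 + 1 / (1 + (Φ₁ t)^2)) - 2 * t * (Φ₁ t)^2 * Φ₂ t / (1 + (Φ₁ t)^2)^2)))
        (Set.Ici (0:ℝ)) t := by
      have := ((hd1.pow 2).add (hd2.pow 2)).const_mul (1/2:ℝ)
      refine this.congr_deriv ?_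
      ring
    have := hq.add (hlog.const_mul (1/2:ℝ))
    refine this.congr_deriv ?_
    field_simp
    ring
  · apply div_nonpos_of_nonpos_of_nonneg
    · nlinarith [sq_nonneg (Φ₁ t), sq_nonneg (Φ₂ t), mul_nonneg (mul_nonneg ht (sq_nonneg (Φ₁ t))) (sq_nonneg (Φ₂ t))]
    · positivity
end

section
/- Let H be a real Hilbert space, let L be a continuous linear operator on H, let P be the orthogonal projection onto a closed subspace of H, and set Q = I − P. Then for every v ∈ H, w in the range of P, and t ∈ ℝ: ⟨exp(tQL) Q v, w⟩ = 0; that is, the noise process exp(tQL)Qv stays orthogonal to the space of resolved observables for all time. -/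
open RealInnerProductSpace

/-- **The noise stays orthogonal to the resolved observables.**
On a real Hilbert space, for a continuous linear operator `L` and the orthogonal projection `P`
onto a closed subspace `K` (with `Q = I - P`), for every `v`, every `w` in the range of `P`,
and every `t`: `⟨exp (tQL) (Q v), w⟩ = 0`. -/
theorem noise_orthogonal_to_resolved
    {H : Type*} [NormedAddCommGroup H] [InnerProductSpace ℝ H] [CompleteSpace H]
    (L : H →L[ℝ] H)
    (K : Submodule ℝ H) (hK : IsClosed (K : Set H)) [K.HasOrthogonalProjection]
    (P : H →L[ℝ] H) (hP : ∀ x : H, P x = (K.orthogonalProjectionOnto x : H))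
    (Q : H →L[ℝ] H) (hQ : Q = 1 - P)
    (v w : H) (hw : w ∈ K) (t : ℝ) :
    ⟪NormedSpace.exp (t • (Q * L)) (Q v), w⟫ = 0 := by
  set A : H →L[ℝ] H := t • (Q * L) with hA
  -- Q maps everything into Kᗮ
  have hQmem : ∀ x : H, Q x ∈ Kᗮ := by
    intro x
    have : Q x = x - (K.orthogonalProjectionOnto x : H) := by
      simp [hQ, hP x, ContinuousLinearMap.sub_apply]
    rw [this]
    exact K.sub_starProjection_mem_orthogonal x
  have hAmem : ∀ x : H, A x ∈ Kᗮ := by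
    intro x
    have : A x = t • Q (L x) := by
      simp [hA, ContinuousLinearMap.smul_apply, ContinuousLinearMap.mul_apply]
    rw [this]
    exact Submodule.smul_mem _ _ (hQmem _)
  have hpow : ∀ n : ℕ, (A ^ n) (Q v) ∈ Kᗮ := by
    intro n
    cases n with
    | zero => simpa using hQmem v
    | succ m =>
      rw [pow_succ']
      exact hAmem _
  -- the linear functional T ↦ ⟪T (Q v), w⟫
  let f : (H →L[ℝ] H) →L[ℝ] ℝ :=
    (innerSL ℝ w).comp (ContinuousLinearMap.apply ℝ H (Q v))
  have hf : ∀ T : H →L[ℝ] H, f T = ⟪w, T (Q v)⟫ := fun T => rfl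
  have hsum : Summable fun n : ℕ => ((n.factorial : ℝ)⁻¹) • A ^ n :=
    NormedSpace.expSeries_summable' A
  have hexp : NormedSpace.exp A = ∑' n : ℕ, ((n.factorial : ℝ)⁻¹) • A ^ n :=
    congrFun (NormedSpace.exp_eq_tsum ℝ) A
  have : f (NormedSpace.exp A) = ∑' n : ℕ, f (((n.factorial : ℝ)⁻¹) • A ^ n) := by
    rw [hexp]
    exact (f.hasSum hsum.hasSum).tsum_eq.symm
  have hterm : ∀ n : ℕ, f (((n.factorial : ℝ)⁻¹) • A ^ n) = 0 := by
    intro n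
    have h0 : ⟪w, (A ^ n) (Q v)⟫ = 0 :=
      (Submodule.mem_orthogonal K _).1 (Submodule.orthogonal_le (le_refl K) (hpow n)) w hw
    rw [hf, ContinuousLinearMap.smul_apply, inner_smul_right, h0, mul_zero]
  have hfin : f (NormedSpace.exp A) = 0 := by
    rw [this]
    simp [hterm]
  calc ⟪NormedSpace.exp A (Q v), w⟫ = f (NormedSpace.exp A) := by
        rw [hf]; exact real_inner_comm _ _
    _ = 0 := hfin
end
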